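/- Let T > 0 and θ : ℝ → ℝ be continuous and T-periodic, and let h ∈ C³([0,T];ℝ) with h(0)=h'(0)=h''(0)=0. Then for τ ∈ (0,1], ∫₀ᵀ h(t) θ((T−t)/τ) dt = ⟨θ⟩ ∫₀ᵀ h − τ ⟨θ₁⟩ h(T) + τ² ⟨θ₂⟩ h'(T) − τ³ ∫₀ᵀ h'''(t) θ₃((T−t)/τ) dt, where ⟨f⟩ := (1/T)∫₀ᵀ f, θ₀ := θ and θ_{k+1}(t) := (t/T)∫₀ᵀ θ_k − ∫₀ᵗ θ_k. In particular ∫₀ᵀ h(t) θ((T−t)/τ) dt → ⟨θ⟩ ∫₀ᵀ h as τ → 0. -/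

import Mathlib

open MeasureTheory
open intervalIntegral Set

/-- The iterated averaged primitives `θ_k` of a `T`-periodic function `θ`:
`θ₀ := θ` and `θ_{k+1}(t) := (t/T)∫₀ᵀ θ_k − ∫₀ᵗ θ_k`. -/
noncomputable def thIter (T : ℝ) (θ : ℝ → ℝ) : ℕ → ℝ → ℝ
  | 0 => θ
  | (k+1) => fun t => (t / T) * (∫ x in (0:ℝ)..T, thIter T θ k x) - ∫ x in (0:ℝ)..t, thIter T θ k x

variable {T : ℝ} {θ : ℝ → ℝ}

lemma thIter_cont (hθ : Continuous θ) (k : ℕ) : Continuous (thIter T θ k) := by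
  induction k with
  | zero => exact hθ
  | succ k ih =>
    exact ((continuous_id.div_const T).mul continuous_const).sub
      (intervalIntegral.continuous_primitive (fun a b => ih.intervalIntegrable a b) 0)

lemma thIter_hasDerivAt (hθ : Continuous θ) (k : ℕ) (t : ℝ) :
    HasDerivAt (thIter T θ (k+1))
      ((1 / T) * (∫ x in (0:ℝ)..T, thIter T θ k x) - thIter T θ k t) t := by
  have ih := thIter_cont (T := T) hθ k
  have h1 : HasDerivAt (fun t : ℝ => (t / T) * (∫ x in (0:ℝ)..T, thIter T θ k x))
      ((1 / T) * (∫ x in (0:ℝ)..T, thIter T θ k x)) t := by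
    simpa [one_div] using ((hasDerivAt_id t).div_const T).mul_const (∫ x in (0:ℝ)..T, thIter T θ k x)
  have h2 : HasDerivAt (fun u : ℝ => ∫ x in (0:ℝ)..u, thIter T θ k x) (thIter T θ k t) t :=
    integral_hasDerivAt_right (ih.intervalIntegrable 0 t)
      (ih.stronglyMeasurableAtFilter _ _) ih.continuousAt
  exact h1.sub h2

lemma thIter_zero (k : ℕ) : thIter T θ (k+1) 0 = 0 := by
  simp [thIter]

lemma thIter_periodic (hθ : Continuous θ) (hper : Function.Periodic θ T) :
    ∀ k, Function.Periodic (thIter T θ k) T := by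
  intro k
  induction k with
  | zero => exact hper
  | succ k ih =>
    have ihc := thIter_cont (T := T) hθ k
    intro t
    have hsplit : (∫ x in (0:ℝ)..(t+T), thIter T θ k x)
        = (∫ x in (0:ℝ)..t, thIter T θ k x) + ∫ x in t..(t+T), thIter T θ k x :=
      (integral_add_adjacent_intervals (ihc.intervalIntegrable 0 t)
        (ihc.intervalIntegrable t (t+T))).symm
    have hp : (∫ x in t..(t+T), thIter T θ k x) = ∫ x in (0:ℝ)..T, thIter T θ k x := by
      simpa using ih.intervalIntegral_add_eq t 0
    by_cases hT : T = 0
    · simp [thIter, hT]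
    · simp only [thIter, hsplit, hp]
      field_simp
      ring

/-- One integration by parts step. -/
lemma ibp_step (hθ : Continuous θ) (k : ℕ) (g g' : ℝ → ℝ)
    (hg : ∀ x, HasDerivAt g (g' x) x) (hg' : Continuous g') (hg0 : g 0 = 0)
    {τ : ℝ} (hτ : 0 < τ) :
    (∫ x in (0:ℝ)..T, g x * thIter T θ k ((T - x) / τ)) =
      ((1 / T) * ∫ x in (0:ℝ)..T, thIter T θ k x) * (∫ x in (0:ℝ)..T, g x)
        - τ * ∫ x in (0:ℝ)..T, g' x * thIter T θ (k+1) ((T - x) / τ) := by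
  have hgc : Continuous g := by
    refine continuous_iff_continuousAt.2 fun x => (hg x).continuousAt
  set C : ℝ := ∫ x in (0:ℝ)..T, thIter T θ k x with hC
  set v : ℝ → ℝ := fun x => -τ * thIter T θ (k+1) ((T - x) / τ) with hv_def
  set v' : ℝ → ℝ := fun x => (1 / T) * C - thIter T θ k ((T - x) / τ) with hv'_def
  have hcomp : Continuous fun x : ℝ => (T - x) / τ :=
    (continuous_const.sub continuous_id).div_const τ
  have hvc : Continuous v := continuous_const.mul ((thIter_cont (T := T) hθ (k+1)).comp hcomp)
  have hv'c : Continuous v' := continuous_const.sub ((thIter_cont (T := T) hθ k).comp hcomp)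
  have hv : ∀ x, HasDerivAt v (v' x) x := by
    intro x
    have inner : HasDerivAt (fun x : ℝ => (T - x) / τ) ((0 - 1) / τ) x :=
      ((hasDerivAt_const x T).sub (hasDerivAt_id x)).div_const τ
    have := ((thIter_hasDerivAt (T := T) hθ k ((T - x) / τ)).comp x inner).const_mul (-τ)
    refine this.congr_deriv ?_
    rw [mul_comm (_ - _) _, ← mul_assoc, show -τ * ((0 - 1) / τ) = 1 by
      rw [zero_sub, neg_div, mul_neg, neg_mul, neg_neg, mul_one_div_cancel hτ.ne'], one_mul]
  have hsplit : (∫ x in (0:ℝ)..T, g x * thIter T θ k ((T - x) / τ))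
      = (∫ x in (0:ℝ)..T, g x * ((1 / T) * C)) - ∫ x in (0:ℝ)..T, g x * v' x := by
    have hsub := integral_sub ((hgc.mul (continuous_const (y := (1 / T) * C))).intervalIntegrable (μ := volume) 0 T)
      ((hgc.mul hv'c).intervalIntegrable (μ := volume) 0 T)
    simp only [Pi.mul_apply] at hsub
    rw [← hsub]
    congr 1; ext x; simp only [hv'_def]; ring
  have hibp : (∫ x in (0:ℝ)..T, g x * v' x)
      = g T * v T - g 0 * v 0 - ∫ x in (0:ℝ)..T, g' x * v x :=
    integral_mul_deriv_eq_deriv_mul (fun x _ => hg x) (fun x _ => hv x)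
      (hg'.intervalIntegrable 0 T) (hv'c.intervalIntegrable 0 T)
  have hvT : v T = 0 := by
    simp [hv_def, thIter_zero]
  have hpull : (∫ x in (0:ℝ)..T, g' x * v x)
      = -τ * ∫ x in (0:ℝ)..T, g' x * thIter T θ (k+1) ((T - x) / τ) := by
    rw [← intervalIntegral.integral_const_mul]
    congr 1; ext x; simp only [hv_def]; ring
  rw [hsplit, hibp, hvT, hg0, hpull, intervalIntegral.integral_mul_const]
  ring

theorem stmt15 (T : ℝ) (hT : 0 < T) (θ : ℝ → ℝ) (hθ : Continuous θ)
    (hper : Function.Periodic θ T) (h : ℝ → ℝ) (hh : ContDiff ℝ 3 h)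
    (h0 : h 0 = 0) (h1 : deriv h 0 = 0) (h2 : deriv (deriv h) 0 = 0) :
    (∀ τ : ℝ, τ ∈ Set.Ioc (0:ℝ) 1 →
      (∫ x in (0:ℝ)..T, h x * θ ((T - x) / τ)) =
        ((1 / T) * ∫ x in (0:ℝ)..T, θ x) * (∫ x in (0:ℝ)..T, h x)
        - τ * ((1 / T) * ∫ x in (0:ℝ)..T, thIter T θ 1 x) * h T
        + τ ^ 2 * ((1 / T) * ∫ x in (0:ℝ)..T, thIter T θ 2 x) * deriv h T
        - τ ^ 3 * ∫ x in (0:ℝ)..T, deriv (deriv (deriv h)) x * thIter T θ 3 ((T - x) / τ)) ∧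
    Filter.Tendsto (fun τ : ℝ => ∫ x in (0:ℝ)..T, h x * θ ((T - x) / τ))
      (nhdsWithin 0 (Set.Ioi 0))
      (nhds (((1 / T) * ∫ x in (0:ℝ)..T, θ x) * ∫ x in (0:ℝ)..T, h x)) := by
  -- smoothness data
  have e3 : (3 : WithTop ℕ∞) = 2 + 1 := by norm_num
  have H1 : ContDiff ℝ 2 (deriv h) := (contDiff_succ_iff_deriv.mp (e3 ▸ hh)).2.2
  have hdiff0 : Differentiable ℝ h := (contDiff_succ_iff_deriv.mp (e3 ▸ hh)).1
  have e2 : (2 : WithTop ℕ∞) = 1 + 1 := by norm_num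
  have H2 : ContDiff ℝ 1 (deriv (deriv h)) := (contDiff_succ_iff_deriv.mp (e2 ▸ H1)).2.2
  have hdiff1 : Differentiable ℝ (deriv h) := (contDiff_succ_iff_deriv.mp (e2 ▸ H1)).1
  have hdiff2 : Differentiable ℝ (deriv (deriv h)) := H2.differentiable one_ne_zero
  have hc3 : Continuous (deriv (deriv (deriv h))) := (contDiff_one_iff_deriv.mp H2).2
  have hc2 : Continuous (deriv (deriv h)) := hdiff2.continuous
  have hc1 : Continuous (deriv h) := hdiff1.continuous
  have hd0 : ∀ x, HasDerivAt h (deriv h x) x := fun x => (hdiff0 x).hasDerivAt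
  have hd1 : ∀ x, HasDerivAt (deriv h) (deriv (deriv h) x) x := fun x => (hdiff1 x).hasDerivAt
  have hd2 : ∀ x, HasDerivAt (deriv (deriv h)) (deriv (deriv (deriv h)) x) x :=
    fun x => (hdiff2 x).hasDerivAt
  -- FTC facts
  have ftc1 : (∫ x in (0:ℝ)..T, deriv h x) = h T := by
    rw [integral_deriv_eq_sub (fun x _ => hdiff0 x) (hc1.intervalIntegrable 0 T), h0, sub_zero]
  have ftc2 : (∫ x in (0:ℝ)..T, deriv (deriv h) x) = deriv h T := by
    rw [integral_deriv_eq_sub (fun x _ => hdiff1 x) (hc2.intervalIntegrable 0 T), h1, sub_zero]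
  have key : ∀ τ : ℝ, 0 < τ →
      (∫ x in (0:ℝ)..T, h x * θ ((T - x) / τ)) =
        ((1 / T) * ∫ x in (0:ℝ)..T, θ x) * (∫ x in (0:ℝ)..T, h x)
        - τ * ((1 / T) * ∫ x in (0:ℝ)..T, thIter T θ 1 x) * h T
        + τ ^ 2 * ((1 / T) * ∫ x in (0:ℝ)..T, thIter T θ 2 x) * deriv h T
        - τ ^ 3 * ∫ x in (0:ℝ)..T, deriv (deriv (deriv h)) x * thIter T θ 3 ((T - x) / τ) := by
    intro τ hτ
    have s0 := ibp_step (T := T) hθ 0 h (deriv h) hd0 hc1 h0 hτ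
    have s1 := ibp_step (T := T) hθ 1 (deriv h) (deriv (deriv h)) hd1 hc2 h1 hτ
    have s2 := ibp_step (T := T) hθ 2 (deriv (deriv h)) (deriv (deriv (deriv h))) hd2 hc3 h2 hτ
    have e0 : (∫ x in (0:ℝ)..T, h x * θ ((T - x) / τ))
        = ∫ x in (0:ℝ)..T, h x * thIter T θ 0 ((T - x) / τ) := rfl
    have eθ : (∫ x in (0:ℝ)..T, thIter T θ 0 x) = ∫ x in (0:ℝ)..T, θ x := rfl
    rw [e0, s0, eθ, s1, ftc1, s2, ftc2]
    ring
  refine ⟨fun τ hτ => key τ hτ.1, ?_⟩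
  -- boundedness of θ₃
  have hcont3 := thIter_cont (T := T) hθ 3
  have hper3 := thIter_periodic (T := T) hθ hper 3
  obtain ⟨M, hM⟩ := (isCompact_Icc (a := (0:ℝ)) (b := T)).exists_bound_of_continuousOn
    hcont3.continuousOn
  have hMall : ∀ y : ℝ, |thIter T θ 3 y| ≤ M := by
    intro y
    obtain ⟨z, hz, hzy⟩ := hper3.exists_mem_Ico₀ hT y
    rw [hzy]
    exact hM z ⟨hz.1, hz.2.le⟩
  obtain ⟨B, hB⟩ := (isCompact_Icc (a := (0:ℝ)) (b := T)).exists_bound_of_continuousOn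
    hc3.continuousOn
  have hB0 : 0 ≤ B := le_trans (norm_nonneg _) (hB 0 ⟨le_rfl, hT.le⟩)
  -- uniform bound on the remainder integral
  have hrem : ∀ τ : ℝ, ‖∫ x in (0:ℝ)..T, deriv (deriv (deriv h)) x * thIter T θ 3 ((T - x) / τ)‖
      ≤ B * M * |T - 0| := by
    intro τ
    refine intervalIntegral.norm_integral_le_of_norm_le_const fun x hx => ?_
    have hx' : x ∈ Set.Icc (0:ℝ) T := by
      rcases hx with hx
      have : Set.uIoc (0:ℝ) T = Set.Ioc 0 T := Set.uIoc_of_le hT.le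
      rw [this] at hx
      exact ⟨hx.1.le, hx.2⟩
    have hb1 : ‖deriv (deriv (deriv h)) x‖ ≤ B := hB x hx'
    have hb2 : |thIter T θ 3 ((T - x) / τ)| ≤ M := hMall _
    calc ‖deriv (deriv (deriv h)) x * thIter T θ 3 ((T - x) / τ)‖
        = ‖deriv (deriv (deriv h)) x‖ * |thIter T θ 3 ((T - x) / τ)| := by
          rw [norm_mul]; rfl
      _ ≤ B * M := mul_le_mul hb1 hb2 (abs_nonneg _) hB0
  set L : ℝ := ((1 / T) * ∫ x in (0:ℝ)..T, θ x) * ∫ x in (0:ℝ)..T, h x with hL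
  set A1 : ℝ := ((1 / T) * ∫ x in (0:ℝ)..T, thIter T θ 1 x) * h T with hA1
  set A2 : ℝ := ((1 / T) * ∫ x in (0:ℝ)..T, thIter T θ 2 x) * deriv h T with hA2
  set J : ℝ → ℝ := fun τ => ∫ x in (0:ℝ)..T, deriv (deriv (deriv h)) x * thIter T θ 3 ((T - x) / τ)
    with hJ
  have t1 : Filter.Tendsto (fun τ : ℝ => L - τ * A1 + τ ^ 2 * A2)
      (nhdsWithin 0 (Set.Ioi 0)) (nhds L) := by
    have : Filter.Tendsto (fun τ : ℝ => L - τ * A1 + τ ^ 2 * A2) (nhds 0) (nhds L) := by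
      have hcont : Continuous fun τ : ℝ => L - τ * A1 + τ ^ 2 * A2 := by continuity
      have := hcont.tendsto 0
      simpa using this
    exact this.mono_left nhdsWithin_le_nhds
  have t2 : Filter.Tendsto (fun τ : ℝ => τ ^ 3 * J τ)
      (nhdsWithin 0 (Set.Ioi 0)) (nhds 0) := by
    have hg : Filter.Tendsto (fun τ : ℝ => |τ ^ 3| * (B * M * |T - 0|))
        (nhdsWithin 0 (Set.Ioi 0)) (nhds 0) := by
      have hcont : Continuous fun τ : ℝ => |τ ^ 3| * (B * M * |T - 0|) := by continuity
      have := hcont.tendsto 0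
      simpa using this.mono_left nhdsWithin_le_nhds
    refine squeeze_zero_norm' ?_ hg
    refine Filter.Eventually.of_forall fun τ => ?_
    calc ‖τ ^ 3 * J τ‖ = |τ ^ 3| * ‖J τ‖ := by rw [norm_mul]; rfl
      _ ≤ |τ ^ 3| * (B * M * |T - 0|) := by
          exact mul_le_mul_of_nonneg_left (hrem τ) (abs_nonneg _)
  have tall : Filter.Tendsto (fun τ : ℝ => L - τ * A1 + τ ^ 2 * A2 - τ ^ 3 * J τ)
      (nhdsWithin 0 (Set.Ioi 0)) (nhds L) := by
    simpa using t1.sub t2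
  have hev : (fun τ : ℝ => L - τ * A1 + τ ^ 2 * A2 - τ ^ 3 * J τ)
      =ᶠ[nhdsWithin (0:ℝ) (Set.Ioi 0)] fun τ : ℝ => ∫ x in (0:ℝ)..T, h x * θ ((T - x) / τ) := by
    filter_upwards [self_mem_nhdsWithin] with τ hτ
    simp only [hA1, hA2, hJ, hL]
    linear_combination (key τ hτ).symm
  exact Filter.Tendsto.congr' hev tall
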